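/- arXiv:1110.5455 — 4 statements merged into one kernel-verified Lean document; each statement's English description precedes it below -/
import Mathlib

section
/- Let T₁, …, Tₙ be independent random variables with Tⱼ exponentially distributed with rate j·R (for fixed R > 0). Then the sum Sₙ = T₁ + ⋯ + Tₙ satisfies P(Sₙ ≤ t) = (1 - e^{-t·R})^n for all t ≥ 0. -/
open scoped ENNReal
open MeasureTheory ProbabilityTheory Real Set

lemma iIndepFun_precomp {Ω ι ι' β : Type*} [MeasurableSpace Ω] {μ : Measure Ω}
    [mβ : MeasurableSpace β]
    {g : ι' → ι} (hg : Function.Injective g) {f : ι → Ω → β}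
    (h : iIndepFun (m := fun _ => mβ) f μ) :
    iIndepFun (m := fun _ => mβ) (fun j => f (g j)) μ := by
  classical
  rw [iIndepFun_iff_measure_inter_preimage_eq_mul] at h ⊢
  intro S sets hsets
  have e1 : ∀ j : ι', Function.extend g sets (fun _ => Set.univ) (g j) = sets j :=
    fun j => hg.extend_apply _ _ _
  have H := h (S.map ⟨g, hg⟩)
      (sets := fun i => Function.extend g sets (fun _ => Set.univ) i) ?_
  · have h2 : (⋂ i ∈ S.map ⟨g, hg⟩, f i ⁻¹' Function.extend g sets (fun _ => Set.univ) i)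
        = ⋂ j ∈ S, f (g j) ⁻¹' sets j := by
      ext x
      simp only [Set.mem_iInter, Finset.mem_map, Function.Embedding.coeFn_mk]
      constructor
      · intro hx j hj
        have := hx (g j) ⟨j, hj, rfl⟩
        rwa [e1] at this
      · rintro hx i ⟨j, hj, rfl⟩
        rw [e1]
        exact hx j hj
    rw [h2, Finset.prod_map] at H
    simpa only [Function.Embedding.coeFn_mk, e1] using H
  · intro i hi
    obtain ⟨j, hj, rfl⟩ := Finset.mem_map.mp hi
    simp only [Function.Embedding.coeFn_mk]
    rw [e1]
    exact hsets j hj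

lemma cdf_add_exp {Ω : Type*} [MeasureSpace Ω] [IsProbabilityMeasure (ℙ : Measure Ω)]
    {S X : Ω → ℝ} (hS : Measurable S) (hX : Measurable X)
    (hind : IndepFun S X ℙ) {c : ℝ}
    (hXd : Measure.map X ℙ = expMeasure c)
    {F : ℝ → ℝ≥0∞} (hFm : Measurable F) (hF : ∀ s, ℙ {ω | S ω ≤ s} = F s) (t : ℝ) :
    ℙ {ω | S ω + X ω ≤ t} = ∫⁻ y, exponentialPDF c y * F (t - y) := by
  haveI : IsProbabilityMeasure (Measure.map S ℙ) :=
    Measure.isProbabilityMeasure_map hS.aemeasurable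
  haveI : IsProbabilityMeasure (Measure.map X ℙ) :=
    Measure.isProbabilityMeasure_map hX.aemeasurable
  have hset : MeasurableSet {p : ℝ × ℝ | p.1 + p.2 ≤ t} :=
    measurableSet_le (measurable_fst.add measurable_snd) measurable_const
  have h1 : ℙ {ω | S ω + X ω ≤ t}
      = Measure.map (fun ω => (S ω, X ω)) ℙ {p : ℝ × ℝ | p.1 + p.2 ≤ t} := by
    rw [Measure.map_apply (hS.prodMk hX) hset]
    rfl
  rw [h1, (indepFun_iff_map_prod_eq_prod_map_map hS.aemeasurable hX.aemeasurable).mp hind,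
    Measure.prod_apply_symm hset]
  have h2 : ∀ y : ℝ, (Measure.map S ℙ) ((fun x => (x, y)) ⁻¹' {p : ℝ × ℝ | p.1 + p.2 ≤ t})
      = F (t - y) := by
    intro y
    have : ((fun x : ℝ => (x, y)) ⁻¹' {p : ℝ × ℝ | p.1 + p.2 ≤ t}) = Iic (t - y) := by
      ext x
      simp only [Set.mem_preimage, Set.mem_setOf_eq, Set.mem_Iic]
      constructor <;> intro h <;> linarith
    rw [this, Measure.map_apply hS measurableSet_Iic, ← hF (t - y)]
    rfl
  simp_rw [h2]
  rw [hXd]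
  show ∫⁻ y, F (t - y) ∂(volume.withDensity (exponentialPDF c)) = _
  have hpdf : Measurable (exponentialPDF c) := by
    unfold exponentialPDF
    exact (measurable_exponentialPDFReal c).ennreal_ofReal
  rw [lintegral_withDensity_eq_lintegral_mul volume
    (g := fun y => F (t - y)) hpdf (hFm.comp (measurable_const.sub measurable_id))]
  rfl

lemma integral_step (R t : ℝ) (n : ℕ) :
    ∫ y in (0:ℝ)..t,
      (((n : ℝ) + 1) * R * exp (-(((n : ℝ) + 1) * R * y))) * (1 - exp (-((t - y) * R))) ^ n
      = (1 - exp (-(t * R))) ^ (n + 1) := by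
  set c : ℝ := ((n : ℝ) + 1) * R with hc
  have key : ∀ y ∈ Set.uIcc (0:ℝ) t,
      HasDerivAt (fun y => -((1 - exp (-((t - y) * R))) ^ (n + 1) * exp (-(c * y))))
        ((c * exp (-(c * y))) * (1 - exp (-((t - y) * R))) ^ n) y := by
    intro y _
    have h1 : HasDerivAt (fun y : ℝ => -((t - y) * R)) R y := by
      have := ((hasDerivAt_id y).sub_const t).mul_const R
      simp only [one_mul] at this
      exact this.congr_of_eventuallyEq (Filter.Eventually.of_forall fun z => by simp only [id]; ring)
    have h2 : HasDerivAt (fun y : ℝ => exp (-((t - y) * R))) (exp (-((t - y) * R)) * R) y :=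
      h1.exp
    have h3 : HasDerivAt (fun y : ℝ => 1 - exp (-((t - y) * R)))
        (-(exp (-((t - y) * R)) * R)) y := by
      exact h2.const_sub 1
    have h4 := h3.pow (n + 1)
    have h5 : HasDerivAt (fun y : ℝ => exp (-(c * y))) (exp (-(c * y)) * (-c)) y := by
      have : HasDerivAt (fun y : ℝ => -(c * y)) (-c) y := by
        have := (hasDerivAt_id y).const_mul c
        simp only [mul_one] at this
        exact this.neg
      exact this.exp
    have h6 := (h4.mul h5).neg
    refine h6.congr_deriv ?_
    push_cast
    simp only [Pi.pow_apply, hc]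
    ring
  have hcont : Continuous fun y =>
      (c * exp (-(c * y))) * (1 - exp (-((t - y) * R))) ^ n := by
    fun_prop
  have := intervalIntegral.integral_eq_sub_of_hasDerivAt key
    (hcont.intervalIntegrable 0 t)
  rw [this]
  simp [sub_self, exp_zero]

lemma lint_eval (R : ℝ) (hR : 0 < R) (n : ℕ) (t : ℝ) :
    (∫⁻ y, exponentialPDF (((n : ℝ) + 1) * R) y *
      (if 0 ≤ t - y then ENNReal.ofReal ((1 - exp (-((t - y) * R))) ^ n) else 0))
      = if 0 ≤ t then ENNReal.ofReal ((1 - exp (-(t * R))) ^ (n + 1)) else 0 := by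
  set c : ℝ := ((n : ℝ) + 1) * R with hc
  have hcpos : 0 < c := by positivity
  by_cases ht : 0 ≤ t
  · rw [if_pos ht]
    set h : ℝ → ℝ := fun y => (c * exp (-(c * y))) * (1 - exp (-((t - y) * R))) ^ n with hh
    have hpt : ∀ y, exponentialPDF c y *
        (if 0 ≤ t - y then ENNReal.ofReal ((1 - exp (-((t - y) * R))) ^ n) else 0)
        = (Icc 0 t).indicator (fun y => ENNReal.ofReal (h y)) y := by
      intro y
      rcases lt_or_ge y 0 with hy | hy
      · rw [exponentialPDF_of_neg hy, zero_mul,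
          Set.indicator_of_notMem (fun hmem => absurd hmem.1 (not_le.mpr hy))]
      · rcases le_or_gt y t with hyt | hyt
        · rw [exponentialPDF_of_nonneg hy, if_pos (by linarith),
            Set.indicator_of_mem (Set.mem_Icc.mpr ⟨hy, hyt⟩), ← ENNReal.ofReal_mul (by positivity)]
        · rw [if_neg (by linarith), mul_zero,
            Set.indicator_of_notMem (fun hmem => absurd hmem.2 (not_le.mpr hyt))]
    rw [lintegral_congr hpt, lintegral_indicator measurableSet_Icc _]
    have hcont : Continuous h := by fun_prop
    have hint : IntegrableOn h (Icc 0 t) := hcont.integrableOn_Icc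
    have hnn : 0 ≤ᵐ[volume.restrict (Icc 0 t)] h := by
      filter_upwards [ae_restrict_mem measurableSet_Icc] with y hy
      have h1 : exp (-((t - y) * R)) ≤ 1 := by
        rw [exp_le_one_iff]
        nlinarith [hy.2, hR.le]
      have : (0:ℝ) ≤ 1 - exp (-((t - y) * R)) := by linarith
      positivity
    rw [← ofReal_integral_eq_lintegral_ofReal hint hnn,
      MeasureTheory.integral_Icc_eq_integral_Ioc,
      ← intervalIntegral.integral_of_le ht, integral_step]
  · rw [if_neg ht]
    have hpt : ∀ y : ℝ, exponentialPDF c y *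
        (if 0 ≤ t - y then ENNReal.ofReal ((1 - exp (-((t - y) * R))) ^ n) else 0) = 0 := by
      intro y
      rcases lt_or_ge y 0 with hy | hy
      · rw [exponentialPDF_of_neg hy, zero_mul]
      · rw [if_neg (by push_neg at ht ⊢; linarith), mul_zero]
    rw [lintegral_congr hpt, lintegral_zero]

lemma key_cdf {Ω : Type*} [MeasureSpace Ω] [IsProbabilityMeasure (ℙ : Measure Ω)]
    (R : ℝ) (hR : 0 < R) (n : ℕ) :
    ∀ (T : Fin n → Ω → ℝ), (∀ j, Measurable (T j)) →
      iIndepFun (m := fun _ => Real.measurableSpace) T ℙ →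
      (∀ j : Fin n, Measure.map (T j) ℙ = expMeasure (((j : ℕ) + 1) * R)) →
      ∀ t : ℝ, ℙ {ω | ∑ j, T j ω ≤ t} =
        if 0 ≤ t then ENNReal.ofReal ((1 - exp (-(t * R))) ^ n) else 0 := by
  induction n with
  | zero =>
    intro T _ _ _ t
    by_cases ht : 0 ≤ t
    · simp [ht]
    · push_neg at ht
      have : {ω : Ω | (0:ℝ) ≤ t} = ∅ := by
        ext ω; simp [not_le.mpr ht]
      simp only [Finset.univ_eq_empty, Finset.sum_empty, this]
      simp [not_le.mpr ht]
  | succ n ih =>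
    intro T hmeas hindep hdist t
    set S : Ω → ℝ := fun ω => ∑ j : Fin n, T j.castSucc ω with hSdef
    have hSmeas : Measurable S := Finset.measurable_sum _ fun j _ => hmeas _
    have hT' : iIndepFun (m := fun _ => Real.measurableSpace)
        (fun j : Fin n => T j.castSucc) ℙ :=
      iIndepFun_precomp (Fin.castSucc_injective n) hindep
    have hd' : ∀ j : Fin n,
        Measure.map (T j.castSucc) ℙ = expMeasure (((j : ℕ) + 1) * R) := by
      intro j
      simpa using hdist j.castSucc
    have hF := ih (fun j => T j.castSucc) (fun j => hmeas _) hT' hd'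
    -- independence of S and T (last n)
    set e : Fin n ↪ Fin (n + 1) := ⟨Fin.castSucc, Fin.castSucc_injective n⟩ with he
    have hlast : Fin.last n ∉ Finset.univ.map e := by
      simp only [Finset.mem_map, Finset.mem_univ, true_and, he,
        Function.Embedding.coeFn_mk, not_exists]
      intro j
      exact (Fin.castSucc_lt_last j).ne
    have hind2 := hindep.indepFun_finset_sum_of_notMem hmeas hlast
    have hsum_eq : (∑ j ∈ Finset.univ.map e, T j) = S := by
      funext ω
      rw [Finset.sum_map, Finset.sum_apply]
      rfl
    rw [hsum_eq] at hind2
    have hXd : Measure.map (T (Fin.last n)) ℙ = expMeasure (((n : ℝ) + 1) * R) := by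
      simpa using hdist (Fin.last n)
    have hset_eq : {ω | ∑ j, T j ω ≤ t} = {ω | S ω + T (Fin.last n) ω ≤ t} := by
      ext ω
      simp only [Set.mem_setOf_eq, Fin.sum_univ_castSucc]
      exact Iff.rfl
    have hFm : Measurable fun s : ℝ =>
        if 0 ≤ s then ENNReal.ofReal ((1 - exp (-(s * R))) ^ n) else (0 : ℝ≥0∞) := by
      have hm : Measurable fun s : ℝ => ENNReal.ofReal ((1 - exp (-(s * R))) ^ n) := by
        fun_prop
      exact Measurable.ite measurableSet_Ici hm measurable_const
    have := cdf_add_exp hSmeas (hmeas (Fin.last n)) hind2 hXd hFm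
      (fun s => hF s) t
    rw [hset_eq, this]
    exact lint_eval R hR n t

theorem stmt2 {Ω : Type*} [MeasureSpace Ω] [IsProbabilityMeasure (ℙ : Measure Ω)]
    (R : ℝ) (hR : 0 < R) (n : ℕ) (hn : 1 ≤ n)
    (T : Fin n → Ω → ℝ) (hmeas : ∀ j, Measurable (T j))
    (hindep : iIndepFun (m := fun _ => Real.measurableSpace) T ℙ)
    (hdist : ∀ j : Fin n, Measure.map (T j) ℙ = expMeasure (((j : ℕ) + 1) * R))
    (t : ℝ) (ht : 0 ≤ t) :
    ℙ {ω | ∑ j, T j ω ≤ t} = ENNReal.ofReal ((1 - exp (-(t * R))) ^ n) := by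
  rw [key_cdf R hR n T hmeas hindep hdist t, if_pos ht]
end

section
/- For fixed Q > 0 and integers 1 ≤ n ≤ k, the convolution of f_{n,k}(x) = (k!/((k-n)!(n-1)!))·Q·(e^{Qx}-1)^{k-n}·e^{-kQx} with the exponential density g(x) = (k+1)·Q·e^{-(k+1)·Q·x} equals f_{n,k+1}, i.e., ∫₀ˣ f_{n,k}(u)·g(x-u) du = ((k+1)!/((k+1-n)!(n-1)!))·Q·(e^{Qx}-1)^{k+1-n}·e^{-(k+1)Qx} for all x ≥ 0. -/
open Real

theorem stmt7 (Q : ℝ) (hQ : 0 < Q) (n k : ℕ) (hn : 1 ≤ n) (hnk : n ≤ k) (x : ℝ) (hx : 0 ≤ x) :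
    ∫ u in (0:ℝ)..x,
        (((k.factorial : ℝ) / ((k - n).factorial * (n - 1).factorial)) * Q *
          (exp (Q * u) - 1) ^ (k - n) * exp (-(k * Q * u))) *
        (((k : ℝ) + 1) * Q * exp (-(((k : ℝ) + 1) * Q * (x - u))))
      = (((k + 1).factorial : ℝ) / ((k + 1 - n).factorial * (n - 1).factorial)) * Q *
          (exp (Q * x) - 1) ^ (k + 1 - n) * exp (-(((k : ℝ) + 1) * Q * x)) := by
  set m := k - n with hm
  have hkn : k + 1 - n = m + 1 := by omega
  set A : ℝ := (k.factorial : ℝ) / ((k - n).factorial * (n - 1).factorial) *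
      ((k : ℝ) + 1) * Q / ((m : ℝ) + 1) * exp (-(((k : ℝ) + 1) * Q * x)) with hA
  have hderiv : ∀ u : ℝ, HasDerivAt (fun u : ℝ => A * (exp (Q * u) - 1) ^ (m + 1))
      ((((k.factorial : ℝ) / ((k - n).factorial * (n - 1).factorial)) * Q *
          (exp (Q * u) - 1) ^ (k - n) * exp (-(k * Q * u))) *
        (((k : ℝ) + 1) * Q * exp (-(((k : ℝ) + 1) * Q * (x - u))))) u := by
    intro u
    have h1 : HasDerivAt (fun u : ℝ => exp (Q * u) - 1) (exp (Q * u) * Q) u := by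
      have := (((hasDerivAt_id u).const_mul Q).exp).sub_const 1
      simpa using this
    have h2 := (h1.pow (m + 1)).const_mul A
    refine h2.congr_deriv ?_
    symm
    have hexp : exp (-((k : ℝ) * Q * u)) * exp (-(((k : ℝ) + 1) * Q * (x - u)))
        = exp (-(((k : ℝ) + 1) * Q * x)) * exp (Q * u) := by
      rw [← exp_add, ← exp_add]; congr 1; ring
    have : (m + 1 - 1) = m := by omega
    rw [this, hA]
    have h3 : (((k.factorial : ℝ) / ((k - n).factorial * (n - 1).factorial)) * Q *
          (exp (Q * u) - 1) ^ (k - n) * exp (-(k * Q * u))) *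
        (((k : ℝ) + 1) * Q * exp (-(((k : ℝ) + 1) * Q * (x - u))))
        = ((k.factorial : ℝ) / ((k - n).factorial * (n - 1).factorial)) * Q *
          (exp (Q * u) - 1) ^ (k - n) * (((k : ℝ) + 1) * Q) *
          (exp (-((k : ℝ) * Q * u)) * exp (-(((k : ℝ) + 1) * Q * (x - u)))) := by ring
    rw [h3, hexp]
    have hm1 : ((m : ℝ) + 1) ≠ 0 := by positivity
    push_cast
    field_simp
    ring
  have hint : IntervalIntegrable (fun u : ℝ =>
      (((k.factorial : ℝ) / ((k - n).factorial * (n - 1).factorial)) * Q *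
          (exp (Q * u) - 1) ^ (k - n) * exp (-(k * Q * u))) *
        (((k : ℝ) + 1) * Q * exp (-(((k : ℝ) + 1) * Q * (x - u)))))
      MeasureTheory.volume 0 x := by
    apply Continuous.intervalIntegrable
    continuity
  have key := intervalIntegral.integral_eq_sub_of_hasDerivAt
    (f := fun u : ℝ => A * (exp (Q * u) - 1) ^ (m + 1))
    (fun u _ => hderiv u) hint
  rw [key]
  have h0 : exp (Q * 0) - 1 = 0 := by simp
  rw [h0, hkn]
  have hfac : ((k + 1).factorial : ℝ) = ((k : ℝ) + 1) * k.factorial := by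
    rw [Nat.factorial_succ]; push_cast; ring
  have hfacm : (((k + 1 - n).factorial : ℝ)) = ((m : ℝ) + 1) * (m.factorial : ℝ) := by
    rw [hkn, Nat.factorial_succ]; push_cast; ring
  simp only [zero_pow (Nat.succ_ne_zero m), mul_zero, sub_zero]
  have hfacm2 : (((m + 1).factorial : ℝ)) = ((m : ℝ) + 1) * (m.factorial : ℝ) := by
    rw [Nat.factorial_succ]; push_cast; ring
  rw [hA, hfac, hfacm2, ← hm]
  have h1 : ((m.factorial : ℝ)) ≠ 0 := Nat.cast_ne_zero.2 m.factorial_ne_zero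
  have h2 : (((n-1).factorial : ℝ)) ≠ 0 := Nat.cast_ne_zero.2 (n-1).factorial_ne_zero
  have h3 : ((m:ℝ)+1) ≠ 0 := by positivity
  field_simp
end

section
/- Let the sum S_n^k = T_n + T_{n+1} + ⋯ + T_k of independent random variables with T_i ~ Exp(i·Q) for a fixed Q > 0. Then P(S_n^k ≤ t) = (k!/((k-n)!·(n-1)!)) · Q · ∫₀ᵗ (e^{Q·x}-1)^{k-n} · e^{-k·Q·x} dx for all t ≥ 0. -/
open MeasureTheory ProbabilityTheory Real

section Stmt8Aux

open Set
open scoped ENNReal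

noncomputable def dens (Q : ℝ) (n k : ℕ) (x : ℝ) : ℝ :=
  if 0 ≤ x then ((k.factorial : ℝ) / ((k - n).factorial * (n - 1).factorial)) * Q *
    ((exp (Q * x) - 1) ^ (k - n) * exp (-(k * Q * x))) else 0

lemma conv_withDensity (f g : ℝ → ℝ≥0∞) (hf : Measurable f) (hg : Measurable g) :
    Measure.map (fun p : ℝ × ℝ => p.1 + p.2)
      ((volume.withDensity f).prod (volume.withDensity g))
    = volume.withDensity (fun z => ∫⁻ x, f x * g (z - x)) := by
  ext s hs
  rw [Measure.map_apply measurable_add hs, withDensity_apply _ hs,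
    Measure.prod_apply (measurable_add hs)]
  have h1 : ∀ x : ℝ, (volume.withDensity g) (Prod.mk x ⁻¹' ((fun p : ℝ × ℝ => p.1 + p.2) ⁻¹' s))
      = ∫⁻ z in s, g (z - x) := by
    intro x
    have hps : Prod.mk x ⁻¹' ((fun p : ℝ × ℝ => p.1 + p.2) ⁻¹' s) = (fun y => x + y) ⁻¹' s := rfl
    rw [hps, withDensity_apply _ (measurableSet_preimage (measurable_const_add x) hs)]
    have := (measurePreserving_add_left volume x).setLIntegral_comp_preimage_emb
      (MeasurableEquiv.addLeft x).measurableEmbedding (fun z => g (z - x)) s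
    rw [← this]
    refine setLIntegral_congr_fun (measurableSet_preimage (measurable_const_add x) hs) ?_
    intro y _
    simp [MeasurableEquiv.addLeft]
  simp_rw [h1]
  have hg2 : Measurable (Function.uncurry fun x z : ℝ => g (z - x)) :=
    hg.comp (measurable_snd.sub measurable_fst)
  have hmeasx : Measurable fun x : ℝ => ∫⁻ z in s, g (z - x) :=
    Measurable.lintegral_prod_right (ν := volume.restrict s) hg2
  rw [lintegral_withDensity_eq_lintegral_mul _ hf hmeasx]
  simp only [Pi.mul_apply]
  have h2 : ∀ x : ℝ, f x * ∫⁻ z in s, g (z - x) = ∫⁻ z in s, f x * g (z - x) := fun x =>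
    (lintegral_const_mul (f x) (hg.comp (measurable_id.sub measurable_const))).symm
  simp_rw [h2]
  rw [lintegral_lintegral_swap]
  exact ((hf.comp measurable_fst).mul (hg.comp (measurable_snd.sub measurable_fst))).aemeasurable

lemma conv_dens {Q : ℝ} (hQ : 0 < Q) {n k : ℕ} (hn : 1 ≤ n) (hk : n ≤ k) (z : ℝ) :
    ∫⁻ x, ENNReal.ofReal (dens Q n k x) * exponentialPDF (((k : ℝ) + 1) * Q) (z - x)
      = ENNReal.ofReal (dens Q n (k + 1) z) := by
  set C : ℝ := (k.factorial : ℝ) / ((k - n).factorial * (n - 1).factorial) with hC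
  have hC0 : 0 < C := by
    apply div_pos (by exact_mod_cast k.factorial_pos)
    positivity
  set m : ℕ := k - n with hm
  set r : ℝ := (k : ℝ) + 1 with hr
  have hrQ : 0 < r * Q := by positivity
  rcases lt_or_ge z 0 with hz | hz
  · have h0 : ∀ x : ℝ, ENNReal.ofReal (dens Q n k x) * exponentialPDF (r * Q) (z - x) = 0 := by
      intro x
      rcases lt_or_ge x 0 with hx | hx
      · rw [show dens Q n k x = 0 from if_neg (not_le.2 hx)]
        simp
      · rw [exponentialPDF_of_neg (by linarith)]
        simp
    simp_rw [h0]
    rw [lintegral_zero, show dens Q n (k+1) z = 0 from if_neg (not_le.2 hz),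
      ENNReal.ofReal_zero]
  · -- z ≥ 0
    set F : ℝ → ℝ := fun x => (C * Q * ((exp (Q * x) - 1) ^ m * exp (-(k * Q * x)))) *
      (r * Q * exp (-(r * Q * (z - x)))) with hF
    have hFcont : Continuous F := by fun_prop
    have hstep1 : (fun x => ENNReal.ofReal (dens Q n k x) * exponentialPDF (r * Q) (z - x))
        = (Icc 0 z).indicator (fun x => ENNReal.ofReal (F x)) := by
      funext x
      rcases lt_or_ge x 0 with hx | hx
      · rw [show dens Q n k x = 0 from if_neg (not_le.2 hx),
          indicator_of_notMem (by simp [mem_Icc]; intro h; linarith)]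
        simp
      · rcases le_or_gt x z with hxz | hxz
        · rw [show dens Q n k x = C * Q * ((exp (Q * x) - 1) ^ m * exp (-(k * Q * x))) from
            if_pos hx, exponentialPDF_of_nonneg (by linarith),
            indicator_of_mem (mem_Icc.2 ⟨hx, hxz⟩)]
          rw [← ENNReal.ofReal_mul]
          have h1 : (1:ℝ) ≤ exp (Q * x) := by
            rw [← exp_zero]; exact exp_le_exp.2 (by positivity)
          have : (0:ℝ) ≤ exp (Q * x) - 1 := by linarith
          positivity
        · rw [exponentialPDF_of_neg (by linarith),
            indicator_of_notMem (by simp [mem_Icc]; intro h; linarith)]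
          simp
    rw [hstep1, lintegral_indicator measurableSet_Icc _]
    have hint : IntegrableOn F (Icc 0 z) := hFcont.integrableOn_Icc
    rw [← ofReal_integral_eq_lintegral_ofReal hint ?pos]
    case pos =>
      filter_upwards [ae_restrict_mem measurableSet_Icc] with x hx
      have h1 : (1:ℝ) ≤ exp (Q * x) := by
        rw [← exp_zero]; exact exp_le_exp.2 (mul_nonneg hQ.le hx.1)
      have : (0:ℝ) ≤ exp (Q * x) - 1 := by linarith
      positivity
    -- compute the real integral
    congr 1
    rw [MeasureTheory.integral_Icc_eq_integral_Ioc, ← intervalIntegral.integral_of_le hz]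
    set D : ℝ := C * Q * (r * Q) * exp (-(r * Q * z)) with hD
    have hFeq : ∀ x : ℝ, F x = D * ((exp (Q * x) - 1) ^ m * exp (Q * x)) := by
      intro x
      rw [hF, hD]
      have : exp (-(k * Q * x)) * exp (-(r * Q * (z - x))) =
          exp (-(r * Q * z)) * exp (Q * x) := by
        rw [← exp_add, ← exp_add]
        congr 1
        rw [hr]; ring
      calc C * Q * ((exp (Q * x) - 1) ^ m * exp (-(k * Q * x))) *
            (r * Q * exp (-(r * Q * (z - x))))
          = C * Q * (r * Q) * ((exp (Q * x) - 1) ^ m *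
            (exp (-(k * Q * x)) * exp (-(r * Q * (z - x))))) := by ring
        _ = _ := by rw [this]; ring
    have hderiv : ∀ x ∈ uIcc (0:ℝ) z,
        HasDerivAt (fun y => D / ((m + 1 : ℝ) * Q) * (exp (Q * y) - 1) ^ (m + 1)) (F x) x := by
      intro x _
      have h1 : HasDerivAt (fun y : ℝ => exp (Q * y) - 1) (Q * exp (Q * x)) x := by
        have := ((hasDerivAt_id x).const_mul Q).exp
        simpa [mul_comm] using this.sub_const 1
      have h2 := (h1.pow (m + 1)).const_mul (D / ((m + 1 : ℝ) * Q))
      refine h2.congr_deriv (Eq.symm ?_)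
      rw [hFeq x, Nat.add_sub_cancel]
      push_cast
      field_simp
    rw [intervalIntegral.integral_eq_sub_of_hasDerivAt hderiv
      (hFcont.intervalIntegrable 0 z)]
    simp only [mul_zero, exp_zero, sub_self, zero_pow (Nat.succ_ne_zero m), mul_zero, sub_zero]
    -- final algebra
    rw [show dens Q n (k+1) z = ((k+1).factorial : ℝ) / (((k+1) - n).factorial *
      (n - 1).factorial) * Q * ((exp (Q * z) - 1) ^ ((k+1) - n) * exp (-((k+1 : ℕ) * Q * z)))
      from if_pos hz]
    have hsub : (k + 1) - n = m + 1 := by omega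
    rw [hsub, hD]
    have hfac1 : (((k+1).factorial : ℕ) : ℝ) = ((k:ℝ) + 1) * k.factorial := by
      rw [Nat.factorial_succ]; push_cast; ring
    have hfac2 : (((m+1).factorial : ℕ) : ℝ) = ((m:ℝ) + 1) * m.factorial := by
      rw [Nat.factorial_succ]; push_cast; ring
    rw [hfac1, hfac2]
    have hmf : ((m.factorial : ℝ)) ≠ 0 := by exact_mod_cast m.factorial_pos.ne'
    have hnf : (((n-1).factorial : ℝ)) ≠ 0 := by exact_mod_cast (n-1).factorial_pos.ne'
    have hm1 : ((m:ℝ) + 1) ≠ 0 := by positivity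
    have hcast : ((k+1 : ℕ) : ℝ) = r := by rw [hr]; push_cast; ring
    rw [hcast, hC]
    field_simp
    ring

lemma measurable_dens (Q : ℝ) (n k : ℕ) : Measurable (dens Q n k) := by
  unfold dens
  exact Measurable.ite measurableSet_Ici (by fun_prop) measurable_const

lemma measurable_expPDF (r : ℝ) : Measurable (exponentialPDF r) :=
  ENNReal.measurable_ofReal.comp (measurable_exponentialPDFReal r)

lemma law_sum {Ω : Type*} [MeasureSpace Ω] [IsProbabilityMeasure (ℙ : Measure Ω)]
    {Q : ℝ} (hQ : 0 < Q) {n : ℕ} (hn : 1 ≤ n)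
    (T : ℕ → Ω → ℝ) (hmeas : ∀ i, Measurable (T i))
    (hindep : iIndepFun (m := fun _ => Real.measurableSpace) T ℙ)
    (k : ℕ) (hk : n ≤ k)
    (hdist : ∀ i ∈ Finset.Icc n k, Measure.map (T i) ℙ = expMeasure ((i : ℝ) * Q)) :
    Measure.map (fun ω => ∑ i ∈ Finset.Icc n k, T i ω) ℙ
      = volume.withDensity (fun x => ENNReal.ofReal (dens Q n k x)) := by
  induction k, hk using Nat.le_induction with
  | base =>
    simp only [Finset.Icc_self, Finset.sum_singleton]
    rw [hdist n (by simp)]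
    show volume.withDensity (exponentialPDF ((n : ℝ) * Q)) = _
    congr 1
    funext x
    rw [exponentialPDF_eq]
    unfold dens
    obtain ⟨p, rfl⟩ : ∃ p, n = p + 1 := ⟨n - 1, by omega⟩
    congr 1
    split_ifs with h
    · simp only [Nat.sub_self, pow_zero, Nat.add_sub_cancel, Nat.factorial_zero, one_mul,
        Nat.factorial_succ]
      push_cast
      have : ((p.factorial : ℝ)) ≠ 0 := by exact_mod_cast p.factorial_pos.ne'
      field_simp
    · rfl
  | succ k hk ih =>
    have hdist' : ∀ i ∈ Finset.Icc n k, Measure.map (T i) ℙ = expMeasure ((i : ℝ) * Q) :=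
      fun i hi => hdist i (by simp only [Finset.mem_Icc] at hi ⊢; omega)
    have hIH := ih hdist'
    have hnotmem : (k + 1) ∉ Finset.Icc n k := by simp
    set S := fun ω => ∑ i ∈ Finset.Icc n k, T i ω with hS
    have hSmeas : Measurable S := Finset.measurable_sum _ (fun i _ => hmeas i)
    have hsum : (fun ω => ∑ i ∈ Finset.Icc n (k + 1), T i ω)
        = fun ω => S ω + T (k + 1) ω := by
      funext ω
      rw [show Finset.Icc n (k + 1) = insert (k + 1) (Finset.Icc n k) by
        ext j; simp only [Finset.mem_insert, Finset.mem_Icc]; omega,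
        Finset.sum_insert hnotmem, hS]
      ring
    have hindSX : IndepFun S (T (k + 1)) ℙ := by
      have h := hindep.indepFun_finsetSum_of_notMem hmeas hnotmem
      have he : (∑ j ∈ Finset.Icc n k, T j) = S := by
        funext ω; rw [Finset.sum_apply]
      rwa [he] at h
    have hcomp : (fun ω => S ω + T (k + 1) ω)
        = (fun p : ℝ × ℝ => p.1 + p.2) ∘ (fun ω => (S ω, T (k + 1) ω)) := rfl
    rw [hsum, hcomp, ← Measure.map_map measurable_add (hSmeas.prodMk (hmeas _)),
      (indepFun_iff_map_prod_eq_prod_map_map hSmeas.aemeasurable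
        (hmeas _).aemeasurable).1 hindSX,
      hIH, hdist (k + 1) (by simp only [Finset.mem_Icc]; omega)]
    rw [show expMeasure ((↑(k + 1) : ℝ) * Q) = volume.withDensity
      (exponentialPDF ((↑(k + 1) : ℝ) * Q)) from rfl,
      conv_withDensity (fun x => ENNReal.ofReal (dens Q n k x))
        (exponentialPDF ((↑(k + 1) : ℝ) * Q))
        (ENNReal.measurable_ofReal.comp (measurable_dens Q n k)) (measurable_expPDF _)]
    congr 1
    funext z
    have hc : ((k + 1 : ℕ) : ℝ) = (k : ℝ) + 1 := by push_cast; ring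
    rw [hc]
    exact conv_dens hQ hn hk z

end Stmt8Aux

section
open Set
open scoped ENNReal

theorem stmt8 {Ω : Type*} [MeasureSpace Ω] [IsProbabilityMeasure (ℙ : Measure Ω)]
    (Q : ℝ) (hQ : 0 < Q) (n k : ℕ) (hn : 1 ≤ n) (hnk : n ≤ k)
    (T : ℕ → Ω → ℝ) (hmeas : ∀ i, Measurable (T i))
    (hindep : iIndepFun (m := fun _ => Real.measurableSpace) T ℙ)
    (hdist : ∀ i ∈ Finset.Icc n k, Measure.map (T i) ℙ = expMeasure ((i : ℝ) * Q))
    (t : ℝ) (ht : 0 ≤ t) :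
    ℙ {ω | ∑ i ∈ Finset.Icc n k, T i ω ≤ t}
      = ENNReal.ofReal (((k.factorial : ℝ) / ((k - n).factorial * (n - 1).factorial)) * Q *
          ∫ x in (0:ℝ)..t, (exp (Q * x) - 1) ^ (k - n) * exp (-(k * Q * x))) := by
  have hlaw := law_sum hQ hn T hmeas hindep k hnk hdist
  have hSmeas : Measurable fun ω => ∑ i ∈ Finset.Icc n k, T i ω :=
    Finset.measurable_sum _ fun i _ => hmeas i
  set C : ℝ := (k.factorial : ℝ) / ((k - n).factorial * (n - 1).factorial) with hC
  have hC0 : 0 ≤ C := by positivity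
  have hset : {ω | ∑ i ∈ Finset.Icc n k, T i ω ≤ t}
      = (fun ω => ∑ i ∈ Finset.Icc n k, T i ω) ⁻¹' (Iic t) := rfl
  rw [hset, ← Measure.map_apply hSmeas measurableSet_Iic, hlaw,
    withDensity_apply _ measurableSet_Iic,
    lintegral_Iic_eq_lintegral_Iio_add_Icc _ ht]
  have h0 : ∫⁻ x in Iio (0:ℝ), ENNReal.ofReal (dens Q n k x) = 0 := by
    have hae : ∀ᵐ x ∂(volume.restrict (Iio (0:ℝ))), ENNReal.ofReal (dens Q n k x) = 0 := by
      rw [ae_restrict_iff' measurableSet_Iio]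
      filter_upwards with x hx
      rw [show dens Q n k x = 0 from if_neg (not_le.2 hx), ENNReal.ofReal_zero]
    rw [lintegral_congr_ae hae, lintegral_zero]
  rw [h0, zero_add]
  set F : ℝ → ℝ := fun x => C * Q * ((exp (Q * x) - 1) ^ (k - n) * exp (-(k * Q * x))) with hF
  have hFcont : Continuous F := by fun_prop
  have hcong : ∫⁻ x in Icc (0:ℝ) t, ENNReal.ofReal (dens Q n k x)
      = ∫⁻ x in Icc (0:ℝ) t, ENNReal.ofReal (F x) :=
    setLIntegral_congr_fun measurableSet_Icc (fun x hx => by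
      rw [show dens Q n k x = F x from if_pos hx.1])
  rw [hcong, ← ofReal_integral_eq_lintegral_ofReal hFcont.integrableOn_Icc ?pos]
  case pos =>
    filter_upwards [ae_restrict_mem measurableSet_Icc] with x hx
    have h1 : (1:ℝ) ≤ exp (Q * x) := by
      rw [← exp_zero]; exact exp_le_exp.2 (mul_nonneg hQ.le hx.1)
    have : (0:ℝ) ≤ exp (Q * x) - 1 := by linarith
    rw [hF]
    positivity
  congr 1
  rw [MeasureTheory.integral_Icc_eq_integral_Ioc, ← intervalIntegral.integral_of_le ht, hF,
    ← intervalIntegral.integral_const_mul]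

end
end

section
/- Fix reals W > 0 and 0 < S ≤ W, and an integer n ≥ 1. Then ∑_{k=n}^∞ [ (k!/((k-n)!(n-1)!)) · W · ∫₀ᵗ (e^{Wx}-1)^{k-n} e^{-kWx} dx ] · (1/k)·(S/W) · ∏_{i=n}^{k-1} (1 - (1/i)·(S/W)) = 1 - e^{-t·S} for every t ≥ 0. -/
open Real Filter MeasureTheory Set

noncomputable def rr (c : ℝ) (j : ℕ) : ℝ := (∏ i ∈ Finset.range j, (c + i)) / j.factorial

lemma rr_zero (c : ℝ) : rr c 0 = 1 := by simp [rr]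

lemma rr_nonneg {c : ℝ} (hc : 0 ≤ c) (j : ℕ) : 0 ≤ rr c j := by
  unfold rr
  apply div_nonneg _ (by positivity)
  exact Finset.prod_nonneg fun i _ => by positivity

lemma rr_rec (c : ℝ) (j : ℕ) : ((j : ℝ) + 1) * rr c (j + 1) = (c + j) * rr c j := by
  unfold rr
  rw [Finset.prod_range_succ, Nat.factorial_succ]
  have h1 : ((j.factorial : ℝ)) ≠ 0 := by positivity
  push_cast
  field_simp

lemma summable_of_rec {f : ℕ → ℝ} {c z : ℝ} (hc : 0 ≤ c) (hz0 : 0 ≤ z) (hz1 : z < 1)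
    (hf : ∀ j, 0 ≤ f j) (hrec : ∀ j : ℕ, ((j : ℝ) + 1) * f (j + 1) ≤ (c + j) * z * f j) :
    Summable f := by
  have hρ : (1 + z) / 2 < 1 := by linarith
  apply summable_of_ratio_norm_eventually_le hρ
  filter_upwards [Filter.eventually_ge_atTop (Nat.ceil (c * z * 2 / (1 - z)))] with j hj
  have hj' : c * z * 2 / (1 - z) ≤ (j : ℝ) := le_trans (Nat.le_ceil _) (by exact_mod_cast hj)
  have hj2 : c * z * 2 ≤ (j : ℝ) * (1 - z) := (div_le_iff₀ (by linarith)).mp hj'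
  have h1 : (c + j) * z ≤ (1 + z) / 2 * ((j : ℝ) + 1) := by nlinarith
  rw [Real.norm_of_nonneg (hf _), Real.norm_of_nonneg (hf _)]
  have h2 : ((j : ℝ) + 1) * f (j + 1) ≤ (1 + z) / 2 * ((j : ℝ) + 1) * f j := by
    calc ((j : ℝ) + 1) * f (j + 1) ≤ (c + j) * z * f j := hrec j
    _ ≤ (1 + z) / 2 * ((j : ℝ) + 1) * f j := mul_le_mul_of_nonneg_right h1 (hf j)
  have hjj : (0 : ℝ) < (j : ℝ) + 1 := by positivity
  nlinarith [hf j, hf (j + 1)]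

lemma summable_rz {c z : ℝ} (hc : 0 ≤ c) (hz0 : 0 ≤ z) (hz1 : z < 1) :
    Summable (fun j : ℕ => rr c j * z ^ j) := by
  apply summable_of_rec hc hz0 hz1 (fun j => mul_nonneg (rr_nonneg hc j) (by positivity))
  intro j
  apply le_of_eq
  rw [pow_succ]
  linear_combination (z ^ j * z) * rr_rec c j

lemma summable_rz' {c z : ℝ} (hc : 0 ≤ c) (hz0 : 0 ≤ z) (hz1 : z < 1) :
    Summable (fun j : ℕ => ((j : ℝ) + 1) * rr c (j + 1) * z ^ j) := by
  apply summable_of_rec (c := c + 1) (by linarith) hz0 hz1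
  · intro j
    have := rr_nonneg hc (j + 1)
    positivity
  · intro j
    apply le_of_eq
    have h := rr_rec c (j + 1)
    push_cast at h ⊢
    rw [pow_succ]
    linear_combination ((j : ℝ) + 1) * (z ^ j * z) * h

lemma hg_identity {c z : ℝ} (hc : 0 ≤ c) (hz0 : 0 ≤ z) (hz1 : z < 1) :
    (1 - z) * ∑' j : ℕ, ((j : ℝ) + 1) * rr c (j + 1) * z ^ j
      = c * ∑' j : ℕ, rr c j * z ^ j := by
  have sG := summable_rz hc hz0 hz1
  have sH := summable_rz' hc hz0 hz1
  have sφs : Summable (fun j : ℕ => ((j : ℝ) + 1) * rr c (j + 1) * z ^ (j + 1)) := by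
    have := sH.mul_left z
    apply this.congr
    intro j
    rw [pow_succ]
    ring
  have sφ : Summable (fun j : ℕ => (j : ℝ) * rr c j * z ^ j) := by
    rw [← summable_nat_add_iff 1]
    apply sφs.congr
    intro j
    push_cast
    ring
  have h1 : ∑' j : ℕ, ((j : ℝ) + 1) * rr c (j + 1) * z ^ j
      = c * (∑' j : ℕ, rr c j * z ^ j) + ∑' j : ℕ, (j : ℝ) * rr c j * z ^ j := by
    rw [← tsum_mul_left, ← Summable.tsum_add (sG.mul_left c) sφ]
    apply tsum_congr
    intro j
    have h := rr_rec c j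
    linear_combination z ^ j * h
  have h2 : z * ∑' j : ℕ, ((j : ℝ) + 1) * rr c (j + 1) * z ^ j
      = ∑' j : ℕ, (j : ℝ) * rr c j * z ^ j := by
    rw [← tsum_mul_left]
    rw [Summable.tsum_eq_zero_add sφ]
    simp only [Nat.cast_zero, zero_mul, zero_add]
    apply tsum_congr
    intro j
    push_cast
    rw [pow_succ]
    ring
  linear_combination h1 - h2

noncomputable def zz (W x : ℝ) : ℝ := 1 - Real.exp (-(W * max x 0))
noncomputable def gg (c W x : ℝ) : ℝ := ∑' j : ℕ, rr c j * zz W x ^ j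

lemma zz_nonneg (hW : 0 < W) (x : ℝ) : 0 ≤ zz W x := by
  unfold zz
  have : -(W * max x 0) ≤ 0 := by
    have : 0 ≤ max x 0 := le_max_right x 0
    nlinarith
  have := Real.exp_le_one_iff.mpr this
  linarith

lemma zz_lt_one (W x : ℝ) : zz W x < 1 := by
  unfold zz
  have := Real.exp_pos (-(W * max x 0))
  linarith

lemma zz_mono (hW : 0 < W) : Monotone (zz W) := by
  intro a b hab
  unfold zz
  have h1 : max a 0 ≤ max b 0 := max_le_max hab le_rfl
  have := Real.exp_le_exp.mpr (neg_le_neg (mul_le_mul_of_nonneg_left h1 hW.le))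
  linarith

lemma zz_of_nonneg (W : ℝ) {x : ℝ} (hx : 0 ≤ x) : zz W x = 1 - Real.exp (-(W * x)) := by
  unfold zz; rw [max_eq_left hx]

lemma gg_mono {c W : ℝ} (hc : 0 ≤ c) (hW : 0 < W) : Monotone (gg c W) := by
  intro a b hab
  apply Summable.tsum_le_tsum _ (summable_rz hc (zz_nonneg hW a) (zz_lt_one W a))
    (summable_rz hc (zz_nonneg hW b) (zz_lt_one W b))
  intro j
  apply mul_le_mul_of_nonneg_left _ (rr_nonneg hc j)
  exact pow_le_pow_left₀ (zz_nonneg hW a) (zz_mono hW hab) j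

lemma gg_nonneg {c W : ℝ} (hc : 0 ≤ c) (hW : 0 < W) (x : ℝ) : 0 ≤ gg c W x :=
  tsum_nonneg fun j => mul_nonneg (rr_nonneg hc j) (pow_nonneg (zz_nonneg hW x) j)

lemma gg_zero {c W : ℝ} (hc : 0 ≤ c) (hW : 0 < W) : gg c W 0 = 1 := by
  have hz : zz W 0 = 0 := by unfold zz; simp
  unfold gg
  rw [hz, tsum_eq_single 0]
  · simp [rr_zero]
  · intro j hj
    rcases Nat.exists_eq_succ_of_ne_zero hj with ⟨m, rfl⟩
    simp [pow_succ]

lemma tsum_integral_swap {F : ℕ → ℝ → ℝ} {X : ℝ} (hX : 0 ≤ X)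
    (hcont : ∀ j, Continuous (F j))
    (hnn : ∀ j, ∀ x ∈ Ioc (0:ℝ) X, 0 ≤ F j x)
    {B : ℕ → ℝ} (hBnn : ∀ j, 0 ≤ B j)
    (hB : ∀ j, ∀ x ∈ Ioc (0:ℝ) X, F j x ≤ B j) (hsB : Summable B) :
    ∫ x in (0:ℝ)..X, (∑' j : ℕ, F j x) = ∑' j : ℕ, ∫ x in (0:ℝ)..X, F j x := by
  have hIoc : ∀ g : ℝ → ℝ, ∫ x in (0:ℝ)..X, g x = ∫ x in Ioc (0:ℝ) X, g x :=
    fun g => intervalIntegral.integral_of_le hX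
  rw [hIoc]
  rw [tsum_congr (fun j => hIoc (F j))]
  apply MeasureTheory.integral_tsum
    (fun j => (hcont j).aestronglyMeasurable.restrict)
  have key : ∀ j : ℕ, ∫⁻ x, ‖F j x‖₊ ∂(volume.restrict (Ioc (0:ℝ) X))
      ≤ ENNReal.ofReal (B j) * ENNReal.ofReal X := by
    intro j
    calc ∫⁻ x, ‖F j x‖₊ ∂(volume.restrict (Ioc (0:ℝ) X))
        ≤ ∫⁻ _, ENNReal.ofReal (B j) ∂(volume.restrict (Ioc (0:ℝ) X)) := by
          apply lintegral_mono_ae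
          rw [ae_restrict_iff' measurableSet_Ioc]
          filter_upwards with x hx
          rw [← enorm_eq_nnnorm, Real.enorm_eq_ofReal (hnn j x hx)]
          exact ENNReal.ofReal_le_ofReal (hB j x hx)
      _ = ENNReal.ofReal (B j) * ENNReal.ofReal X := by
          rw [lintegral_const, Measure.restrict_apply_univ, Real.volume_Ioc, sub_zero]
  apply ne_top_of_le_ne_top _ (ENNReal.tsum_le_tsum key)
  rw [ENNReal.tsum_mul_right, ← ENNReal.ofReal_tsum_of_nonneg hBnn hsB]
  exact ENNReal.mul_ne_top ENNReal.ofReal_ne_top ENNReal.ofReal_ne_top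

lemma hasDerivAt_pow_one_sub_exp (W : ℝ) (j : ℕ) (x : ℝ) :
    HasDerivAt (fun y => (1 - exp (-(W * y))) ^ (j + 1))
      (((j : ℝ) + 1) * (1 - exp (-(W * x))) ^ j * (W * exp (-(W * x)))) x := by
  have h1 : HasDerivAt (fun y : ℝ => -(W * y)) (-W) x := by
    exact (((hasDerivAt_id' x).const_mul W).neg).congr_deriv (by ring)
  have h2 : HasDerivAt (fun y : ℝ => exp (-(W * y))) (exp (-(W * x)) * (-W)) x := h1.exp
  have h3 : HasDerivAt (fun y : ℝ => 1 - exp (-(W * y))) (W * exp (-(W * x))) x := by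
    have := h2.const_sub 1
    exact this.congr_deriv (by ring)
  have h4 := h3.pow (j + 1)
  exact h4.congr_deriv (by rw [Nat.add_sub_cancel]; push_cast; ring)

lemma integral_term (W : ℝ) (j : ℕ) (X : ℝ) :
    ∫ x in (0:ℝ)..X, ((j : ℝ) + 1) * (1 - exp (-(W * x))) ^ j * (W * exp (-(W * x)))
      = (1 - exp (-(W * X))) ^ (j + 1) := by
  have hint : IntervalIntegrable
      (fun x => ((j : ℝ) + 1) * (1 - exp (-(W * x))) ^ j * (W * exp (-(W * x)))) volume 0 X := by
    apply Continuous.intervalIntegrable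
    fun_prop
  have := intervalIntegral.integral_eq_sub_of_hasDerivAt
    (fun x _ => hasDerivAt_pow_one_sub_exp W j x) hint
  rw [this]
  simp

lemma gg_pointwise {c W : ℝ} (hc : 0 ≤ c) (hW : 0 < W) {x : ℝ} (hx : 0 ≤ x) :
    ∑' j : ℕ, ((j : ℝ) + 1) * rr c (j + 1) * (1 - exp (-(W * x))) ^ j * (W * exp (-(W * x)))
      = c * W * gg c W x := by
  have hz0 := zz_nonneg hW x
  have hz1 := zz_lt_one W x
  have hzx : (1 : ℝ) - exp (-(W * x)) = zz W x := (zz_of_nonneg W hx).symm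
  have hsum := hg_identity hc hz0 hz1
  have h1z : 1 - zz W x = exp (-(W * x)) := by rw [zz_of_nonneg W hx]; ring
  have hre : ∑' j : ℕ, ((j : ℝ) + 1) * rr c (j + 1) * (1 - exp (-(W * x))) ^ j
        * (W * exp (-(W * x)))
      = (W * exp (-(W * x))) * ∑' j : ℕ, ((j : ℝ) + 1) * rr c (j + 1) * zz W x ^ j := by
    rw [← tsum_mul_left]
    apply tsum_congr
    intro j
    rw [hzx]
    ring
  rw [hre]
  rw [h1z] at hsum
  have : gg c W x = ∑' j : ℕ, rr c j * zz W x ^ j := rfl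
  rw [this]
  linear_combination W * hsum

lemma gg_int_eq {c W : ℝ} (hc : 0 ≤ c) (hW : 0 < W) {X : ℝ} (hX : 0 ≤ X) :
    gg c W X = 1 + ∫ x in (0:ℝ)..X, c * W * gg c W x := by
  set F : ℕ → ℝ → ℝ := fun j x =>
    ((j : ℝ) + 1) * rr c (j + 1) * (1 - exp (-(W * x))) ^ j * (W * exp (-(W * x))) with hF
  have hz0X := zz_nonneg hW X
  have hz1X := zz_lt_one W X
  have hswap : ∫ x in (0:ℝ)..X, (∑' j : ℕ, F j x) = ∑' j : ℕ, ∫ x in (0:ℝ)..X, F j x := by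
    apply tsum_integral_swap (B := fun j => ((j : ℝ) + 1) * rr c (j + 1) * zz W X ^ j * W) hX
    · intro j; fun_prop
    · intro j x hx
      have h1 : (0:ℝ) ≤ 1 - exp (-(W * x)) := by
        rw [← zz_of_nonneg W hx.1.le]; exact zz_nonneg hW x
      have := rr_nonneg hc (j + 1)
      have := (exp_pos (-(W * x))).le
      positivity
    · intro j
      have h1 := rr_nonneg hc (j + 1)
      have h2 := pow_nonneg hz0X j
      positivity
    · intro j x hx
      have hxz : (1:ℝ) - exp (-(W * x)) = zz W x := (zz_of_nonneg W hx.1.le).symm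
      rw [hF]
      simp only
      rw [hxz]
      have h1 : zz W x ^ j ≤ zz W X ^ j :=
        pow_le_pow_left₀ (zz_nonneg hW x) (zz_mono hW hx.2) j
      have h2 : W * exp (-(W * x)) ≤ W := by
        have : exp (-(W * x)) ≤ 1 := exp_le_one_iff.mpr (by nlinarith [hx.1.le])
        nlinarith
      have h3 := rr_nonneg hc (j + 1)
      have h4 := zz_nonneg hW x
      have h5 := (exp_pos (-(W * x))).le
      have h6 := zz_nonneg hW X
      calc ((j : ℝ) + 1) * rr c (j + 1) * zz W x ^ j * (W * exp (-(W * x)))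
          ≤ ((j : ℝ) + 1) * rr c (j + 1) * zz W X ^ j * (W * exp (-(W * x))) := by
            apply mul_le_mul_of_nonneg_right _ (by positivity)
            apply mul_le_mul_of_nonneg_left h1 (by positivity)
        _ ≤ ((j : ℝ) + 1) * rr c (j + 1) * zz W X ^ j * W :=
            mul_le_mul_of_nonneg_left h2 (by positivity)
    · exact (summable_rz' hc hz0X hz1X).mul_right W
  have hval : ∀ j : ℕ, ∫ x in (0:ℝ)..X, F j x = rr c (j + 1) * zz W X ^ (j + 1) := by
    intro j
    have hre : F j = fun x => rr c (j + 1) *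
        (((j : ℝ) + 1) * (1 - exp (-(W * x))) ^ j * (W * exp (-(W * x)))) := by
      funext x; rw [hF]; ring
    rw [hre, intervalIntegral.integral_const_mul, integral_term, zz_of_nonneg W hX]
  have hsumF : ∑' j : ℕ, ∫ x in (0:ℝ)..X, F j x = gg c W X - 1 := by
    rw [tsum_congr hval]
    have hG : gg c W X = ∑' j : ℕ, rr c j * zz W X ^ j := rfl
    rw [hG, Summable.tsum_eq_zero_add (summable_rz hc hz0X hz1X)]
    simp [rr_zero]
  have hcongr : ∫ x in (0:ℝ)..X, (∑' j : ℕ, F j x) = ∫ x in (0:ℝ)..X, c * W * gg c W x := by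
    apply intervalIntegral.integral_congr
    intro x hx
    rw [uIcc_of_le hX] at hx
    exact gg_pointwise hc hW hx.1
  rw [← hcongr, hswap, hsumF]
  ring

lemma gg_eq_exp {c W : ℝ} (hc : 0 ≤ c) (hW : 0 < W) {X : ℝ} (hX : 0 ≤ X) :
    gg c W X = exp (c * W * X) := by
  have hmono : Monotone (gg c W) := gg_mono hc hW
  have hgnn := gg_nonneg hc hW
  have hmeas : Measurable fun x => c * W * gg c W x := (hmono.measurable).const_mul (c * W)
  have hint : ∀ u : ℝ, 0 ≤ u → IntervalIntegrable (fun x => c * W * gg c W x) volume 0 u := by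
    intro u hu
    rw [intervalIntegrable_iff, uIoc_of_le hu]
    apply Integrable.mono' (integrable_const (c * W * gg c W u)) hmeas.aestronglyMeasurable
    rw [ae_restrict_iff' measurableSet_Ioc]
    filter_upwards with x hx
    rw [Real.norm_of_nonneg (by have := hgnn x; positivity)]
    exact mul_le_mul_of_nonneg_left (hmono hx.2) (by positivity)
  set G : ℝ → ℝ := fun u => ∫ x in (0:ℝ)..u, c * W * gg c W x with hG
  have hGcont : ContinuousOn G (Icc 0 X) := by
    have h1 : IntegrableOn (fun x => c * W * gg c W x) (uIcc 0 X) volume := by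
      rw [uIcc_of_le hX]
      rw [integrableOn_Icc_iff_integrableOn_Ioc]
      have := hint X hX
      rwa [intervalIntegrable_iff, uIoc_of_le hX] at this
    have := intervalIntegral.continuousOn_primitive_interval h1
    rwa [uIcc_of_le hX] at this
  have hgeq : ∀ u ∈ Icc (0:ℝ) X, gg c W u = 1 + G u := fun u hu => gg_int_eq hc hW hu.1
  have hgcont : ContinuousOn (gg c W) (Icc 0 X) :=
    (continuousOn_const.add hGcont).congr hgeq
  set f : ℝ → ℝ := fun u => (1 + G u) * exp (-(c * W * u)) with hf
  have hfcont : ContinuousOn f (Icc 0 X) :=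
    (continuousOn_const.add hGcont).mul (Continuous.continuousOn (by fun_prop))
  have hderiv : ∀ x ∈ Ico (0:ℝ) X, HasDerivWithinAt f 0 (Ici x) x := by
    intro x hx
    have hx0 : 0 ≤ x := hx.1
    have hGd : HasDerivWithinAt G (c * W * gg c W x) (Ici x) x := by
      apply intervalIntegral.integral_hasDerivWithinAt_right (hint x hx0)
        hmeas.aestronglyMeasurable.stronglyMeasurableAtFilter
      have h1 : ContinuousWithinAt (fun y => c * W * gg c W y) (Icc x X) x :=
        ((continuousOn_const.mul hgcont).mono (Icc_subset_Icc hx0 le_rfl)).continuousWithinAt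
          (left_mem_Icc.mpr hx.2.le)
      exact h1.mono_of_mem_nhdsWithin (Icc_mem_nhdsGT_of_mem ⟨le_rfl, hx.2⟩)
    have hexp : HasDerivAt (fun u : ℝ => exp (-(c * W * u)))
        (exp (-(c * W * x)) * (-(c * W))) x := by
      have h1 : HasDerivAt (fun u : ℝ => -(c * W * u)) (-(c * W)) x := by
        exact (((hasDerivAt_id' x).const_mul (c * W)).neg).congr_deriv (by ring)
      exact h1.exp
    have hprod := (hGd.const_add 1).mul (hexp.hasDerivWithinAt)
    refine hprod.congr_deriv ?_
    have h2 : 1 + G x = gg c W x := (hgeq x ⟨hx0, hx.2.le⟩).symm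
    rw [h2]
    ring
  have hconst := constant_of_has_deriv_right_zero hfcont hderiv X (right_mem_Icc.mpr hX)
  have hf0 : f 0 = 1 := by
    rw [hf]
    simp [hG, intervalIntegral.integral_same]
  have hfX : f X = (1 + G X) * exp (-(c * W * X)) := rfl
  have hgX : gg c W X = 1 + G X := hgeq X ⟨hX, le_rfl⟩
  rw [hfX, hf0] at hconst
  have hepos := exp_pos (-(c * W * X))
  have : gg c W X * exp (-(c * W * X)) = 1 := by rw [hgX]; exact hconst
  have hee : exp (-(c * W * X)) * exp (c * W * X) = 1 := by
    rw [← exp_add]; simp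
  nlinarith [this, hee]

lemma fact_prod (m j : ℕ) :
    ((m + j).factorial : ℝ) = (m.factorial : ℝ) * ∏ k ∈ Finset.range j, ((m : ℝ) + 1 + k) := by
  induction j with
  | zero => simp
  | succ j ih =>
    rw [Finset.prod_range_succ, show m + (j + 1) = (m + j) + 1 from rfl, Nat.factorial_succ]
    push_cast
    rw [ih]
    push_cast
    ring

lemma scalar_id (m j : ℕ) (W S : ℝ) (hW : 0 < W) :
    (((m + 1 + j).factorial : ℝ) / ((j.factorial : ℝ) * (m.factorial : ℝ)) * W)
      * ((1 / ((m + 1 + j : ℕ) : ℝ)) * (S / W))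
      * ∏ i ∈ Finset.Ico (m + 1) (m + 1 + j), (1 - (1 / (i : ℝ)) * (S / W))
    = S * rr (((m : ℝ) + 1) - S / W) j := by
  have hfact : ((m + 1 + j).factorial : ℝ) = ((m + 1 + j : ℕ) : ℝ) * ((m + j).factorial : ℝ) := by
    rw [show m + 1 + j = (m + j) + 1 by omega, Nat.factorial_succ]
    push_cast; ring
  have hIco : ∏ i ∈ Finset.Ico (m + 1) (m + 1 + j), (1 - (1 / (i : ℝ)) * (S / W))
      = ∏ k ∈ Finset.range j, (1 - (1 / (((m + 1 + k : ℕ)) : ℝ)) * (S / W)) := by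
    rw [Finset.prod_Ico_eq_prod_range]
    have hj : m + 1 + j - (m + 1) = j := by omega
    rw [hj]
  have hcomb : (∏ k ∈ Finset.range j, ((m : ℝ) + 1 + k))
      * ∏ k ∈ Finset.range j, (1 - (1 / (((m + 1 + k : ℕ)) : ℝ)) * (S / W))
      = ∏ k ∈ Finset.range j, ((((m : ℝ) + 1) - S / W) + k) := by
    rw [← Finset.prod_mul_distrib]
    apply Finset.prod_congr rfl
    intro k _
    have hne : ((m : ℝ) + 1 + k) ≠ 0 := by positivity
    have hcast : (((m + 1 + k : ℕ)) : ℝ) = (m : ℝ) + 1 + k := by push_cast; ring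
    rw [hcast]
    field_simp
    ring
  rw [hIco, hfact, fact_prod m j]
  have h1 : ((m + 1 + j : ℕ) : ℝ) ≠ 0 := by positivity
  have h2 : (j.factorial : ℝ) ≠ 0 := by positivity
  have h3 : (m.factorial : ℝ) ≠ 0 := by positivity
  have h4 : W ≠ 0 := ne_of_gt hW
  rw [rr, ← hcomb]
  field_simp

lemma integrand_id (W : ℝ) (n j : ℕ) (x : ℝ) :
    (exp (W * x) - 1) ^ j * exp (-(((n + j : ℕ) : ℝ) * W * x))
      = (1 - exp (-(W * x))) ^ j * exp (-((n : ℝ) * W * x)) := by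
  have h1 : exp (-(((n + j : ℕ) : ℝ) * W * x))
      = (exp (-(W * x))) ^ j * exp (-((n : ℝ) * W * x)) := by
    rw [← Real.exp_nat_mul, ← Real.exp_add]
    congr 1
    push_cast
    ring
  have h2 : (exp (W * x) - 1) * exp (-(W * x)) = 1 - exp (-(W * x)) := by
    rw [sub_mul, ← exp_add]
    simp
  calc (exp (W * x) - 1) ^ j * exp (-(((n + j : ℕ) : ℝ) * W * x))
      = ((exp (W * x) - 1) * exp (-(W * x))) ^ j * exp (-((n : ℝ) * W * x)) := by
        rw [h1, mul_pow]; ring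
    _ = (1 - exp (-(W * x))) ^ j * exp (-((n : ℝ) * W * x)) := by rw [h2]

theorem stmt12 (W S : ℝ) (hW : 0 < W) (hS : 0 < S) (hSW : S ≤ W)
    (n : ℕ) (hn : 1 ≤ n) (t : ℝ) (ht : 0 ≤ t) :
    ∑' j : ℕ,
        (((n + j).factorial : ℝ) / ((j.factorial : ℝ) * (n - 1).factorial) * W *
            ∫ x in (0:ℝ)..t, (exp (W * x) - 1) ^ j * exp (-((n + j : ℕ) * W * x))) *
          ((1 / ((n + j : ℕ) : ℝ)) * (S / W)) *
          ∏ i ∈ Finset.Ico n (n + j), (1 - (1 / (i : ℝ)) * (S / W))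
      = 1 - exp (-(t * S)) := by
  obtain ⟨m, rfl⟩ : ∃ m, n = m + 1 := ⟨n - 1, (Nat.succ_pred_eq_of_pos hn).symm⟩
  set c : ℝ := ((m : ℝ) + 1) - S / W with hcdef
  have ha1 : S / W ≤ 1 := (div_le_one hW).mpr hSW
  have ha0 : 0 < S / W := div_pos hS hW
  have hc : 0 ≤ c := by
    have : (0 : ℝ) ≤ (m : ℝ) := Nat.cast_nonneg m
    rw [hcdef]; linarith
  set F : ℕ → ℝ → ℝ := fun j x =>
    S * rr c j * (1 - exp (-(W * x))) ^ j * exp (-(((m : ℕ) + 1 : ℝ) * W * x)) with hFdef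
  have hterm : ∀ j : ℕ,
      (((m + 1 + j).factorial : ℝ) / ((j.factorial : ℝ) * (m + 1 - 1).factorial) * W *
            ∫ x in (0:ℝ)..t, (exp (W * x) - 1) ^ j * exp (-((m + 1 + j : ℕ) * W * x))) *
          ((1 / ((m + 1 + j : ℕ) : ℝ)) * (S / W)) *
          ∏ i ∈ Finset.Ico (m + 1) (m + 1 + j), (1 - (1 / (i : ℝ)) * (S / W))
        = ∫ x in (0:ℝ)..t, F j x := by
    intro j
    have hs : (m + 1 - 1 : ℕ) = m := by omega
    rw [hs]
    have hre : (((m + 1 + j).factorial : ℝ) / ((j.factorial : ℝ) * (m.factorial : ℝ)) * W *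
            ∫ x in (0:ℝ)..t, (exp (W * x) - 1) ^ j * exp (-(((m + 1 + j : ℕ) : ℝ) * W * x))) *
          ((1 / ((m + 1 + j : ℕ) : ℝ)) * (S / W)) *
          ∏ i ∈ Finset.Ico (m + 1) (m + 1 + j), (1 - (1 / (i : ℝ)) * (S / W))
        = ((((m + 1 + j).factorial : ℝ) / ((j.factorial : ℝ) * (m.factorial : ℝ)) * W) *
          ((1 / ((m + 1 + j : ℕ) : ℝ)) * (S / W)) *
          ∏ i ∈ Finset.Ico (m + 1) (m + 1 + j), (1 - (1 / (i : ℝ)) * (S / W))) *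
          ∫ x in (0:ℝ)..t, (exp (W * x) - 1) ^ j * exp (-(((m + 1 + j : ℕ) : ℝ) * W * x)) := by
      ring
    rw [hre, scalar_id m j W S hW, ← intervalIntegral.integral_const_mul]
    apply intervalIntegral.integral_congr
    intro x _
    rw [hFdef]
    simp only
    rw [integrand_id W (m + 1) j x]
    push_cast
    ring
  rw [tsum_congr hterm]
  have hcontF : ∀ j, Continuous (F j) := by intro j; rw [hFdef]; fun_prop
  have hz0t := zz_nonneg hW t
  have hz1t := zz_lt_one W t
  have hrnn := rr_nonneg hc
  have hswap := tsum_integral_swap (F := F)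
      (B := fun j => S * rr c j * zz W t ^ j) ht hcontF
      (by
        intro j x hx
        rw [hFdef]
        simp only
        have h1 : (0:ℝ) ≤ 1 - exp (-(W * x)) := by
          rw [← zz_of_nonneg W hx.1.le]; exact zz_nonneg hW x
        have := hrnn j
        have := (exp_pos (-(((m : ℕ) + 1 : ℝ) * W * x))).le
        positivity)
      (by
        intro j
        have := hrnn j
        have := pow_nonneg hz0t j
        positivity)
      (by
        intro j x hx
        rw [hFdef]
        simp only
        have hxz : (1:ℝ) - exp (-(W * x)) = zz W x := (zz_of_nonneg W hx.1.le).symm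
        rw [hxz]
        have h1 : zz W x ^ j ≤ zz W t ^ j :=
          pow_le_pow_left₀ (zz_nonneg hW x) (zz_mono hW hx.2) j
        have h2 : exp (-(((m : ℕ) + 1 : ℝ) * W * x)) ≤ 1 := by
          apply exp_le_one_iff.mpr
          have hx0 : (0:ℝ) ≤ x := hx.1.le
          have hnn : (0:ℝ) ≤ ((m : ℝ) + 1) * W * x := by positivity
          linarith
        have h3 := hrnn j
        have h4 := zz_nonneg hW x
        have h5 := (exp_pos (-(((m : ℕ) + 1 : ℝ) * W * x))).le
        have h6 := zz_nonneg hW t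
        calc S * rr c j * zz W x ^ j * exp (-(((m : ℕ) + 1 : ℝ) * W * x))
            ≤ S * rr c j * zz W t ^ j * exp (-(((m : ℕ) + 1 : ℝ) * W * x)) := by
              apply mul_le_mul_of_nonneg_right _ h5
              apply mul_le_mul_of_nonneg_left h1 (by positivity)
          _ ≤ S * rr c j * zz W t ^ j * 1 :=
              mul_le_mul_of_nonneg_left h2 (by positivity)
          _ = S * rr c j * zz W t ^ j := by ring)
      (by
        apply ((summable_rz hc hz0t hz1t).mul_left S).congr
        intro j
        ring)
  rw [← hswap]
  have hpt : ∀ x : ℝ, 0 ≤ x → ∑' j : ℕ, F j x = S * exp (-(S * x)) := by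
    intro x hx
    have h1 : ∑' j : ℕ, F j x
        = (S * exp (-(((m : ℕ) + 1 : ℝ) * W * x))) * ∑' j : ℕ, rr c j * zz W x ^ j := by
      rw [← tsum_mul_left]
      apply tsum_congr
      intro j
      rw [hFdef]
      simp only
      rw [zz_of_nonneg W hx]
      ring
    rw [h1]
    have h2 : (∑' j : ℕ, rr c j * zz W x ^ j) = gg c W x := rfl
    rw [h2, gg_eq_exp hc hW hx, mul_assoc, ← exp_add]
    congr 1
    congr 1
    rw [hcdef]
    field_simp
    ring
  have hcongr : ∫ x in (0:ℝ)..t, (∑' j : ℕ, F j x) = ∫ x in (0:ℝ)..t, S * exp (-(S * x)) := by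
    apply intervalIntegral.integral_congr
    intro x hx
    rw [uIcc_of_le ht] at hx
    exact hpt x hx.1
  rw [hcongr]
  have hd : ∀ x ∈ uIcc (0:ℝ) t, HasDerivAt (fun y => -exp (-(S * y))) (S * exp (-(S * x))) x := by
    intro x _
    have h1 : HasDerivAt (fun y : ℝ => -(S * y)) (-S) x := by
      exact (((hasDerivAt_id' x).const_mul S).neg).congr_deriv (by ring)
    have := (h1.exp).neg
    exact this.congr_deriv (by ring)
  have hint : IntervalIntegrable (fun x => S * exp (-(S * x))) volume 0 t :=
    Continuous.intervalIntegrable (by fun_prop) 0 t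
  rw [intervalIntegral.integral_eq_sub_of_hasDerivAt hd hint]
  simp [mul_comm]
  ring
end
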